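/- Let K be an algebraically closed field of characteristic 0, n ≥ 2, and let H ∈ K[Y,Z] be homogeneous with H not divisible by (aY − bZ) for a given point [b:a] ∈ P^1. For the curve C: X^n = α·H(Y,Z) (α ∈ K*) and two general lines ℓ_1, ℓ_2 through p = [1:0:0] each meeting C in n distinct points, there exist n lines L_1,...,L_n, each joining a point of C ∩ ℓ_1 to a point of C ∩ ℓ_2, such that L_1,...,L_n all pass through a common point lying on the line X = 0. -/
import Mathlib


open Polynomial

/-- On the curve `X^n = α·H(Y,Z)`, the points on the line `Y = yᵢZ` are
`[ζ^j·xᵢ : yᵢ : 1]` where `xᵢ^n = α·H(yᵢ,1)` and `ζ` is a primitive `n`-th root of unity.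
The `n` lines `L_j` joining `[ζ^j·x₁ : y₁ : 1]` to `[ζ^j·x₂ : y₂ : 1]` all pass through one
common point `q` lying on the line `X = 0` (collinearity expressed by a vanishing 3×3
determinant). -/
theorem joining_lines_concurrent_on_X_eq_zero
    (K : Type*) [Field K] [IsAlgClosed K] [CharZero K]
    (n : ℕ) (hn : 2 ≤ n) (ζ : K) (hζ : IsPrimitiveRoot ζ n)
    (H : K[X]) (α : K) (hα : α ≠ 0)
    (y₁ y₂ x₁ x₂ : K) (hy : y₁ ≠ y₂)
    (hx₁ : x₁ ^ n = α * H.eval y₁) (hx₂ : x₂ ^ n = α * H.eval y₂)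
    (hx₁0 : x₁ ≠ 0) (hx₂0 : x₂ ≠ 0) :
    ∃ q : Fin 3 → K, q ≠ 0 ∧ q 0 = 0 ∧
      ∀ j : Fin n,
        Matrix.det !![ζ ^ (j : ℕ) * x₁, y₁, 1;
                      ζ ^ (j : ℕ) * x₂, y₂, 1;
                      q 0, q 1, q 2] = 0 := by
  refine ⟨![0, x₁ * y₂ - x₂ * y₁, x₁ - x₂], ?_, rfl, ?_⟩
  · intro h
    have h1 : x₁ * y₂ - x₂ * y₁ = 0 := congrFun h 1
    have h2 : x₁ - x₂ = 0 := congrFun h 2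
    have hx : x₁ = x₂ := sub_eq_zero.mp h2
    apply hy
    have h3 : x₁ * (y₂ - y₁) = 0 := by rw [hx] at h1 ⊢; linear_combination h1
    rcases mul_eq_zero.mp h3 with h | h
    · exact absurd h hx₁0
    · exact (sub_eq_zero.mp h).symm
  · intro j
    simp [Matrix.det_fin_three]
    ring
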